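/- The symmetric psd-rank of the tripartite W-state W_3 is at least 3. In particular, since its symmetric border psd-rank equals 2, there is a gap between rank and border rank for symmetric psd-decompositions at n = 3. -/

import Mathlib

open scoped ComplexOrder

/-- The tripartite W-state. -/
noncomputable def Wstate3 : (Fin 3 → Fin 2) → ℂ := fun j =>
  if (Finset.univ.filter (fun i => j i = 1)).card = 1 then 1 else 0

/-- `T` admits a symmetric psd-decomposition of size `r`. -/
def hasSymPsdRankLE (T : (Fin 3 → Fin 2) → ℂ) (r : ℕ) : Prop :=
  ∃ A : Fin 2 → Matrix (Fin r) (Fin r) ℂ,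
    (∀ j, (A j).PosSemidef) ∧
    ∀ j : Fin 3 → Fin 2, T j = ∑ α : Fin r, ∑ β : Fin r, ∏ i, A (j i) α β

lemma psd2 (M : Matrix (Fin 2) (Fin 2) ℂ) (hM : M.PosSemidef) :
    ∃ P Q : ℝ, 0 ≤ P ∧ 0 ≤ Q ∧ M 0 0 = (P:ℂ) ∧ M 1 1 = (Q:ℂ) ∧
      M 1 0 = (starRingEnd ℂ) (M 0 1) ∧ (M 0 1).re^2 + (M 0 1).im^2 ≤ P*Q := by
  obtain ⟨hherm, hq⟩ := Matrix.posSemidef_iff_dotProduct_mulVec.mp hM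
  have h00 : 0 ≤ M 0 0 := by
    have := hq ![1,0]
    simpa [Matrix.mulVec, dotProduct, Fin.sum_univ_two] using this
  have h11 : 0 ≤ M 1 1 := by
    have := hq ![0,1]
    simpa [Matrix.mulVec, dotProduct, Fin.sum_univ_two] using this
  have hc : M 1 0 = (starRingEnd ℂ) (M 0 1) := (hherm.apply 1 0).symm
  obtain ⟨P, hP, hM00⟩ : ∃ P:ℝ, 0 ≤ P ∧ M 0 0 = (P:ℂ) :=
    ⟨(M 0 0).re, (Complex.le_def.1 h00).1,
      Complex.ext (by simp) (by simpa using (Complex.le_def.1 h00).2.symm)⟩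
  obtain ⟨Q, hQ, hM11⟩ : ∃ Q:ℝ, 0 ≤ Q ∧ M 1 1 = (Q:ℂ) :=
    ⟨(M 1 1).re, (Complex.le_def.1 h11).1,
      Complex.ext (by simp) (by simpa using (Complex.le_def.1 h11).2.symm)⟩
  refine ⟨P, Q, hP, hQ, hM00, hM11, hc, ?_⟩
  have q1 := hq ![(Q:ℂ), -(starRingEnd ℂ) (M 0 1)]
  have q2 := hq ![-(M 0 1), (P:ℂ)]
  have q3 := hq ![1, -(starRingEnd ℂ) (M 0 1)]
  simp only [Matrix.mulVec, dotProduct, Fin.sum_univ_two, Matrix.cons_val_zero,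
    Matrix.cons_val_one, Matrix.head_cons, hM00, hM11, hc, Pi.star_apply, star_neg,
    star_one, RCLike.star_def, Complex.conj_conj, Complex.conj_ofReal] at q1 q2 q3
  rw [Complex.le_def] at q1 q2 q3
  obtain ⟨q1, -⟩ := q1; obtain ⟨q2, -⟩ := q2; obtain ⟨q3, -⟩ := q3
  simp only [Complex.add_re, Complex.mul_re, Complex.mul_im, Complex.add_im, Complex.neg_re,
    Complex.neg_im, Complex.ofReal_re, Complex.ofReal_im, Complex.conj_re, Complex.conj_im,
    Complex.one_re, Complex.one_im, Complex.zero_re] at q1 q2 q3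
  ring_nf at q1 q2 q3 ⊢
  by_contra hcon
  push_neg at hcon
  have hQ0 : Q = 0 := le_antisymm (by nlinarith [q1]) hQ
  have hP0 : P = 0 := le_antisymm (by nlinarith [q2]) hP
  subst hQ0; subst hP0
  nlinarith [q3, hcon]

lemma lemA (p q s R I : ℝ) (hp : 0 ≤ p) (hq : 0 ≤ q) (hs : 0 ≤ s)
    (hle : s^2 ≤ p*q) (hmod : R^2 + I^2 = s^6) (heq : p^3 + q^3 + 2*R = 0) :
    p = s ∧ q = s ∧ R = -s^3 ∧ I = 0 := by
  have hs3 : 0 ≤ s^3 := pow_nonneg hs 3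
  have h1 : -s^3 ≤ R := by nlinarith [sq_nonneg I, sq_nonneg (R + s^3), sq_nonneg (R - s^3)]
  have h2 : 2*s ≤ p + q := by nlinarith [sq_nonneg (p-q), sq_nonneg (p+q-2*s), mul_nonneg hp hq]
  have h3 : s^2*(p+q) ≤ p^3+q^3 := by
    nlinarith [mul_nonneg (add_nonneg hp hq) (sq_nonneg (p-q)),
      mul_nonneg (add_nonneg hp hq) (sub_nonneg.2 hle)]
  have h4 : 2*s^3 ≤ s^2*(p+q) := by nlinarith [mul_le_mul_of_nonneg_left h2 (sq_nonneg s)]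
  have h5 : p^3 + q^3 = 2*s^3 := by linarith
  have h7 : R = -s^3 := by linarith
  have h8 : I = 0 := by
    have : I^2 = 0 := by nlinarith [hmod]
    exact pow_eq_zero_iff (n := 2) (by norm_num) |>.1 this
  have h6 : s^2*(p+q) = 2*s^3 := by linarith
  have hz1 : (p+q)*(p-q)^2 = 0 := by
    nlinarith [mul_nonneg (add_nonneg hp hq) (sq_nonneg (p-q)),
      mul_nonneg (add_nonneg hp hq) (sub_nonneg.2 hle)]
  rcases eq_or_lt_of_le (add_nonneg hp hq) with hpq | hpq
  · have hp0 : p = 0 := by linarith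
    have hq0 : q = 0 := by linarith
    have hs0 : s = 0 := by nlinarith [h5]
    exact ⟨by linarith, by linarith, by rw [h7], h8⟩
  · have hpq2 : (p-q)^2 = 0 := by
      rcases mul_eq_zero.1 hz1 with h | h
      · linarith
      · exact h
    have hpq3 : p = q := by
      have := pow_eq_zero_iff (n := 2) (by norm_num) |>.1 hpq2
      linarith
    have hps : p = s := by
      have hcube : p^3 = s^3 := by rw [hpq3] at h5; linarith
      exact (pow_left_inj₀ hp hs (by norm_num)).1 hcube
    exact ⟨hps, by linarith, h7, h8⟩

lemma matFacts (M : Matrix (Fin 2) (Fin 2) ℂ) (hM : M.PosSemidef)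
    (h3 : (0:ℂ) = M 0 0 * M 0 0 * M 0 0 + M 0 1 * M 0 1 * M 0 1 +
      (M 1 0 * M 1 0 * M 1 0 + M 1 1 * M 1 1 * M 1 1)) :
    ∃ (s : ℝ) (w : ℂ), 0 ≤ s ∧ M 0 0 = (s:ℂ) ∧ M 1 1 = (s:ℂ) ∧ M 0 1 = w ∧
      M 1 0 = (starRingEnd ℂ) w ∧ w^3 = -(s:ℂ)^3 ∧ w * (starRingEnd ℂ) w = (s:ℂ)^2 := by
  obtain ⟨P, Q, hP, hQ, hM00, hM11, hc, hle⟩ := psd2 M hM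
  set wr := (M 0 1).re with hwr
  set wi := (M 0 1).im with hwi
  set s := Real.sqrt (wr^2 + wi^2) with hsdef
  have hs : 0 ≤ s := Real.sqrt_nonneg _
  have hs2 : s^2 = wr^2 + wi^2 := Real.sq_sqrt (by positivity)
  have hre := congrArg Complex.re h3
  rw [hM00, hM11, hc] at hre
  simp only [Complex.add_re, Complex.mul_re, Complex.mul_im, Complex.ofReal_re,
    Complex.ofReal_im, Complex.conj_re, Complex.conj_im, Complex.zero_re] at hre
  have heq : P^3 + Q^3 + 2*(wr^3 - 3*wr*wi^2) = 0 := by linear_combination -hre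
  have hmod : (wr^3 - 3*wr*wi^2)^2 + (3*wr^2*wi - wi^3)^2 = s^6 := by
    have : s^6 = (s^2)^3 := by ring
    rw [this, hs2]; ring
  obtain ⟨hPs, hQs, hR, hI⟩ := lemA P Q s (wr^3 - 3*wr*wi^2) (3*wr^2*wi - wi^3)
    hP hQ hs (by rw [hs2]; exact hle) hmod heq
  refine ⟨s, M 0 1, hs, by rw [hM00, hPs], by rw [hM11, hQs], rfl, hc, ?_, ?_⟩
  · apply Complex.ext
    · simp only [pow_succ, pow_zero, one_mul, Complex.mul_re, Complex.mul_im, Complex.neg_re,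
        Complex.ofReal_re, Complex.ofReal_im, ← hwr, ← hwi]
      linear_combination hR
    · simp only [pow_succ, pow_zero, one_mul, Complex.mul_re, Complex.mul_im, Complex.neg_im,
        Complex.ofReal_re, Complex.ofReal_im, ← hwr, ← hwi]
      linear_combination hI
  · rw [Complex.mul_conj]
    norm_cast
    rw [Complex.normSq_apply]
    rw [show s^2 = wr^2+wi^2 from hs2, ← hwr, ← hwi]; ring

theorem symPsdRank_W3_ge_three (r : ℕ) (h : hasSymPsdRankLE Wstate3 r) : 3 ≤ r := by
  by_contra hlt
  push_neg at hlt
  obtain ⟨A, hpsd, heq⟩ := h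
  interval_cases r
  · -- r = 0
    have e001 := heq ![0,0,1]
    simp [Wstate3] at e001
    exact e001 (by decide)
  · -- r = 1
    have e000 := heq ![0,0,0]
    have e001 := heq ![0,0,1]
    simp [Wstate3, Fin.sum_univ_one, Fin.prod_univ_three] at e000 e001
    rw [if_neg (by decide)] at e000
    rw [if_pos (by decide)] at e001
    have hp : A 0 0 0 = 0 := by
      have : A 0 0 0 ^ 3 = 0 := by linear_combination -e000
      exact pow_eq_zero_iff (n := 3) (by norm_num) |>.1 this
    rw [hp] at e001
    simp at e001
  · -- r = 2
    have e000 := heq ![0,0,0]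
    have e001 := heq ![0,0,1]
    have e011 := heq ![0,1,1]
    have e111 := heq ![1,1,1]
    simp [Wstate3, Fin.sum_univ_two, Fin.prod_univ_three] at e000 e001 e011 e111
    rw [if_neg (by decide)] at e000 e011 e111
    rw [if_pos (by decide)] at e001
    obtain ⟨s, w, hs, hM00, hM11, hMw, hM10, hw3, hw2⟩ := matFacts (A 0) (hpsd 0) e000
    obtain ⟨t, z, ht, hN00, hN11, hNz, hN10, hz3, hz2⟩ := matFacts (A 1) (hpsd 1) e111
    rw [hM00, hM11, hMw, hM10, hN00, hN11, hNz, hN10] at e001 e011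
    set w' := (starRingEnd ℂ) w with hw'
    set z' := (starRingEnd ℂ) z with hz'
    -- degenerate cases
    rcases eq_or_lt_of_le hs with hs0 | hs0
    · have hw0 : w = 0 := by
        have : w^3 = 0 := by rw [hw3, ← hs0]; simp
        exact pow_eq_zero_iff (n := 3) (by norm_num) |>.1 this
      rw [← hs0] at e001
      simp [hw', hw0] at e001
    rcases eq_or_lt_of_le ht with ht0 | ht0
    · have hz0 : z = 0 := by
        have : z^3 = 0 := by rw [hz3, ← ht0]; simp
        exact pow_eq_zero_iff (n := 3) (by norm_num) |>.1 this
      rw [← ht0] at e001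
      simp [hz', hz0] at e001
    have hsne : (s:ℂ) ≠ 0 := by exact_mod_cast hs0.ne'
    have htne : (t:ℂ) ≠ 0 := by exact_mod_cast ht0.ne'
    -- conjugate facts
    have hzc : (starRingEnd ℂ) z' = z := by rw [hz']; exact Complex.conj_conj z
    have hwc : (starRingEnd ℂ) w' = w := by rw [hw']; exact Complex.conj_conj w
    -- step 1 : w * z^2 = -(s t^2)
    have hzero : (w*z^2 + (s:ℂ)*(t:ℂ)^2) * (w'*z'^2 + (s:ℂ)*(t:ℂ)^2) = 0 := by
      linear_combination (z*z')^2 * hw2 + (s:ℂ)^2*(z*z'+(t:ℂ)^2) * hz2 - (s:ℂ)*(t:ℂ)^2 * e011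
    have hu : w * z^2 = -((s:ℂ)*(t:ℂ)^2) := by
      rcases mul_eq_zero.1 hzero with hca | hcb
      · exact eq_neg_of_add_eq_zero_left hca
      · have := congrArg (starRingEnd ℂ) (eq_neg_of_add_eq_zero_left hcb)
        simp only [map_mul, map_pow, map_neg, hwc, hzc, Complex.conj_ofReal] at this
        exact this
    have h2 : (t:ℂ)*w = (s:ℂ)*z := by
      apply mul_left_cancel₀ (pow_ne_zero 2 htne)
      linear_combination w*hz3 - z*hu
    have h6 : w^2*z = -((s:ℂ)^2*(t:ℂ)) := by
      apply mul_left_cancel₀ (pow_ne_zero 2 htne)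
      linear_combination ((t:ℂ)*w + (s:ℂ)*z)*z*h2 + (s:ℂ)^2*hz3
    have h7 : w'^2*z' = -((s:ℂ)^2*(t:ℂ)) := by
      have hcj := congrArg (starRingEnd ℂ) h6
      simp only [map_mul, map_pow, map_neg, Complex.conj_ofReal, ← hw', ← hz'] at hcj
      exact hcj
    have hfin : (1:ℂ) = 0 := by linear_combination e001 + h6 + h7
    exact one_ne_zero hfin
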